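/- For Banach lattices E (with dim E ≥ 1) and F (with dim F ≥ 1): every rank-one bounded operator T : E → F is order L-weakly compact if and only if F has order continuous norm (F = F^a). -/

import Mathlib

open Filter Topology

section Defs

/-- A pairwise disjoint sequence in a lattice-ordered group. -/
def DisjSeq {E : Type*} [Lattice E] [AddCommGroup E] (x : ℕ → E) : Prop :=
  ∀ m n : ℕ, m ≠ n → |x m| ⊓ |x n| = 0

/-- The solid hull of a set. -/
def SolidHull {E : Type*} [NormedAddCommGroup E] [Lattice E] [IsOrderedAddMonoid E] [HasSolidNorm E] (A : Set E) : Set E :=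
  {y | ∃ a ∈ A, |y| ≤ |a|}

/-- An L-weakly compact (Lwc) set: bounded, and every disjoint sequence in its
solid hull is norm null. -/
def IsLwcSet {E : Type*} [NormedAddCommGroup E] [Lattice E] [IsOrderedAddMonoid E] [HasSolidNorm E] (A : Set E) : Prop :=
  Bornology.IsBounded A ∧
    ∀ x : ℕ → E, (∀ n, x n ∈ SolidHull A) → DisjSeq x →
      Tendsto (fun n => ‖x n‖) atTop (𝓝 0)

/-- A relatively weakly compact subset of a normed space. -/
def RelWeaklyCompact {X : Type*} [NormedAddCommGroup X] [NormedSpace ℝ X] (A : Set X) : Prop :=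
  IsCompact (closure ((toWeakSpace ℝ X) '' A))

/-- Weak convergence of a sequence in a normed space. -/
def WeakTendsto {X : Type*} [NormedAddCommGroup X] [NormedSpace ℝ X] (x : ℕ → X) (a : X) : Prop :=
  ∀ φ : X →L[ℝ] ℝ, Tendsto (fun n => φ (x n)) atTop (𝓝 (φ a))

/-- A norm-bounded sequence. -/
def BddSeq {X : Type*} [NormedAddCommGroup X] (x : ℕ → X) : Prop :=
  ∃ M : ℝ, ∀ n, ‖x n‖ ≤ M

/-- Almost L-weakly compact operator: maps relatively weakly compact sets onto Lwc sets. -/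
def IsALwc {X F : Type*} [NormedAddCommGroup X] [NormedSpace ℝ X]
    [NormedAddCommGroup F] [Lattice F] [IsOrderedAddMonoid F] [HasSolidNorm F] [NormedSpace ℝ F] (T : X →L[ℝ] F) : Prop :=
  ∀ A : Set X, RelWeaklyCompact A → IsLwcSet (T '' A)

/-- M-weakly compact operator. -/
def IsMwc {E Y : Type*} [NormedAddCommGroup E] [Lattice E] [IsOrderedAddMonoid E] [HasSolidNorm E] [NormedSpace ℝ E]
    [NormedAddCommGroup Y] [NormedSpace ℝ Y] (T : E →L[ℝ] Y) : Prop :=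
  ∀ x : ℕ → E, DisjSeq x → BddSeq x → Tendsto (fun n => ‖T (x n)‖) atTop (𝓝 0)

/-- Almost M-weakly compact operator. -/
def IsAMwc {E Y : Type*} [NormedAddCommGroup E] [Lattice E] [IsOrderedAddMonoid E] [HasSolidNorm E] [NormedSpace ℝ E]
    [NormedAddCommGroup Y] [NormedSpace ℝ Y] (T : E →L[ℝ] Y) : Prop :=
  ∀ (f : ℕ → (Y →L[ℝ] ℝ)) (g : Y →L[ℝ] ℝ), WeakTendsto f g →
    ∀ x : ℕ → E, DisjSeq x → BddSeq x →
      Tendsto (fun n => f n (T (x n))) atTop (𝓝 0)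

/-- Order continuous norm (F = Fᵃ): every disjoint sequence in an order interval
[0, y] is norm null. -/
def HasOCN (F : Type*) [NormedAddCommGroup F] [Lattice F] [IsOrderedAddMonoid F] [HasSolidNorm F] : Prop :=
  ∀ y : F, 0 ≤ y → ∀ x : ℕ → F, (∀ n, x n ∈ Set.Icc (0 : F) y) → DisjSeq x →
    Tendsto (fun n => ‖x n‖) atTop (𝓝 0)

/-- Semi-compact operator. -/
def IsSemiCompact {E F : Type*} [NormedAddCommGroup E] [Lattice E] [IsOrderedAddMonoid E] [HasSolidNorm E] [NormedSpace ℝ E]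
    [NormedAddCommGroup F] [Lattice F] [IsOrderedAddMonoid F] [HasSolidNorm F] [NormedSpace ℝ F] (S : E →L[ℝ] F) : Prop :=
  ∀ ε : ℝ, 0 < ε → ∃ u : F, 0 ≤ u ∧
    ∀ x ∈ Metric.closedBall (0 : E) 1, ∃ w ∈ Set.Icc (-u) u, ‖S x - w‖ ≤ ε

/-- A positive functional on a Banach lattice. -/
def PosFunc {F : Type*} [NormedAddCommGroup F] [Lattice F] [IsOrderedAddMonoid F] [HasSolidNorm F] [NormedSpace ℝ F]
    (f : F →L[ℝ] ℝ) : Prop :=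
  ∀ y : F, 0 ≤ y → 0 ≤ f y

/-- The value of the modulus |f| of a functional at y (meaningful for 0 ≤ y). -/
noncomputable def absDual {F : Type*} [NormedAddCommGroup F] [Lattice F] [IsOrderedAddMonoid F] [HasSolidNorm F] [NormedSpace ℝ F]
    (f : F →L[ℝ] ℝ) (y : F) : ℝ :=
  sSup ((fun z => f z) '' {z : F | |z| ≤ y})

/-- Disjointness of two functionals: (|f| ⊓ |g|)(y) = 0 for all y ≥ 0, via the
Riesz–Kantorovich formula. -/
def DualDisjoint {F : Type*} [NormedAddCommGroup F] [Lattice F] [IsOrderedAddMonoid F] [HasSolidNorm F] [NormedSpace ℝ F]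
    (f g : F →L[ℝ] ℝ) : Prop :=
  ∀ y : F, 0 ≤ y →
    sInf {r : ℝ | ∃ z : F, 0 ≤ z ∧ z ≤ y ∧ r = absDual f z + absDual g (y - z)} = 0

/-- A pairwise disjoint sequence of functionals. -/
def DualDisjSeq {F : Type*} [NormedAddCommGroup F] [Lattice F] [IsOrderedAddMonoid F] [HasSolidNorm F] [NormedSpace ℝ F]
    (f : ℕ → (F →L[ℝ] ℝ)) : Prop :=
  ∀ m n : ℕ, m ≠ n → DualDisjoint (f m) (f n)

/-- A weak* null sequence of functionals. -/
def WeakStarNull {F : Type*} [NormedAddCommGroup F] [NormedSpace ℝ F]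
    (f : ℕ → (F →L[ℝ] ℝ)) : Prop :=
  ∀ y : F, Tendsto (fun n => f n y) atTop (𝓝 0)

/-- Almost limited operator: ‖T* fₙ‖ → 0 for every disjoint weak* null (fₙ) in F*. -/
def IsAlmostLimited {X F : Type*} [NormedAddCommGroup X] [NormedSpace ℝ X]
    [NormedAddCommGroup F] [Lattice F] [IsOrderedAddMonoid F] [HasSolidNorm F] [NormedSpace ℝ F] (T : X →L[ℝ] F) : Prop :=
  ∀ f : ℕ → (F →L[ℝ] ℝ), DualDisjSeq f → WeakStarNull f →
    Tendsto (fun n => ‖(f n).comp T‖) atTop (𝓝 0)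

/-- The canonical order on the dual: f ≤ g iff f y ≤ g y for all y ≥ 0. -/
def DualLE {F : Type*} [NormedAddCommGroup F] [Lattice F] [IsOrderedAddMonoid F] [HasSolidNorm F] [NormedSpace ℝ F]
    (f g : F →L[ℝ] ℝ) : Prop :=
  ∀ y : F, 0 ≤ y → f y ≤ g y

/-- The dual E* is a KB-space: every increasing norm-bounded sequence of positive
functionals is norm convergent. -/
def DualKB (E : Type*) [NormedAddCommGroup E] [Lattice E] [IsOrderedAddMonoid E] [HasSolidNorm E] [NormedSpace ℝ E] : Prop :=
  ∀ f : ℕ → (E →L[ℝ] ℝ), (∀ n, PosFunc (f n)) →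
    (∀ m n : ℕ, m ≤ n → DualLE (f m) (f n)) → (∃ M : ℝ, ∀ n, ‖f n‖ ≤ M) →
      ∃ g : E →L[ℝ] ℝ, Tendsto (fun n => ‖f n - g‖) atTop (𝓝 0)

/-- Positive operator. -/
def PosOp {E F : Type*} [NormedAddCommGroup E] [Lattice E] [IsOrderedAddMonoid E] [HasSolidNorm E] [NormedSpace ℝ E]
    [NormedAddCommGroup F] [Lattice F] [IsOrderedAddMonoid F] [HasSolidNorm F] [NormedSpace ℝ F] (T : E →L[ℝ] F) : Prop :=
  ∀ x : E, 0 ≤ x → 0 ≤ T x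

/-- Order bounded operator: maps order intervals into order intervals. -/
def OrderBoundedOp {E F : Type*} [NormedAddCommGroup E] [Lattice E] [IsOrderedAddMonoid E] [HasSolidNorm E] [NormedSpace ℝ E]
    [NormedAddCommGroup F] [Lattice F] [IsOrderedAddMonoid F] [HasSolidNorm F] [NormedSpace ℝ F] (T : E →L[ℝ] F) : Prop :=
  ∀ a b : E, ∃ c d : F, T '' Set.Icc a b ⊆ Set.Icc c d

/-- Order L-weakly compact operator: maps order bounded sets onto Lwc sets. -/
def IsOLwc {E F : Type*} [NormedAddCommGroup E] [Lattice E] [IsOrderedAddMonoid E] [HasSolidNorm E] [NormedSpace ℝ E]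
    [NormedAddCommGroup F] [Lattice F] [IsOrderedAddMonoid F] [HasSolidNorm F] [NormedSpace ℝ F] (T : E →L[ℝ] F) : Prop :=
  ∀ a b : E, IsLwcSet (T '' Set.Icc a b)

/-- Order M-weakly compact operator. -/
def IsOMwc {E F : Type*} [NormedAddCommGroup E] [Lattice E] [IsOrderedAddMonoid E] [HasSolidNorm E] [NormedSpace ℝ E]
    [NormedAddCommGroup F] [Lattice F] [IsOrderedAddMonoid F] [HasSolidNorm F] [NormedSpace ℝ F] (T : E →L[ℝ] F) : Prop :=
  ∀ f : ℕ → (F →L[ℝ] ℝ),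
    (∃ g h : F →L[ℝ] ℝ, ∀ n, DualLE g (f n) ∧ DualLE (f n) h) →
    ∀ x : ℕ → E, DisjSeq x → BddSeq x →
      Tendsto (fun n => f n (T (x n))) atTop (𝓝 0)

/-- Dunford–Pettis operator. -/
def IsDP {X Y : Type*} [NormedAddCommGroup X] [NormedSpace ℝ X]
    [NormedAddCommGroup Y] [NormedSpace ℝ Y] (T : X →L[ℝ] Y) : Prop :=
  ∀ x : ℕ → X, WeakTendsto x 0 → Tendsto (fun n => ‖T (x n)‖) atTop (𝓝 0)

/-- Weakly sequentially continuous lattice operations. -/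
def WSCLatticeOps (F : Type*) [NormedAddCommGroup F] [Lattice F] [IsOrderedAddMonoid F] [HasSolidNorm F] [NormedSpace ℝ F] : Prop :=
  ∀ x : ℕ → F, WeakTendsto x 0 → WeakTendsto (fun n => |x n|) 0

/-- Limitedly M-weakly compact operator: T xₙ → 0 weakly for each disjoint bounded (xₙ). -/
def IsLMwc {E Y : Type*} [NormedAddCommGroup E] [Lattice E] [IsOrderedAddMonoid E] [HasSolidNorm E] [NormedSpace ℝ E]
    [NormedAddCommGroup Y] [NormedSpace ℝ Y] (T : E →L[ℝ] Y) : Prop :=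
  ∀ x : ℕ → E, DisjSeq x → BddSeq x → WeakTendsto (fun n => T (x n)) 0

end Defs


section Aux

variable {F : Type*} [NormedAddCommGroup F] [Lattice F] [IsOrderedAddMonoid F] [HasSolidNorm F] [NormedSpace ℝ F]

private lemma dyadic_smul_nonneg {y : F} (hy : 0 ≤ y) :
    ∀ (k m : ℕ), 0 ≤ ((m : ℝ) / 2 ^ k) • y := by
  intro k
  induction k with
  | zero =>
    intro m
    simpa [Nat.cast_smul_eq_nsmul] using nsmul_nonneg hy m
  | succ k ih =>
    intro m
    have h2 : (2 : ℕ) • (((m : ℝ) / 2 ^ (k + 1)) • y) = ((m : ℝ) / 2 ^ k) • y := by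
      rw [← Nat.cast_smul_eq_nsmul ℝ, smul_smul]
      congr 1
      push_cast
      ring
    apply nsmul_two_semiclosed
    rw [h2]
    exact ih m

private lemma real_smul_nonneg {c : ℝ} (hc : 0 ≤ c) {y : F} (hy : 0 ≤ y) :
    0 ≤ c • y := by
  set q : ℕ → ℝ := fun k => (⌊c * 2 ^ k⌋₊ : ℝ) / 2 ^ k with hq
  have hql : ∀ k, c - (1 / 2) ^ k ≤ q k := by
    intro k
    have h1 : c * 2 ^ k - 1 < (⌊c * 2 ^ k⌋₊ : ℝ) := Nat.sub_one_lt_floor _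
    have h2 : (0 : ℝ) < 2 ^ k := by positivity
    have h3 : (1 / 2 : ℝ) ^ k * 2 ^ k = 1 := by
      rw [← mul_pow]; norm_num
    show c - (1 / 2) ^ k ≤ (⌊c * 2 ^ k⌋₊ : ℝ) / 2 ^ k
    rw [le_div_iff₀ h2]
    nlinarith [h1, h3]
  have hqu : ∀ k, q k ≤ c := by
    intro k
    have h2 : (0 : ℝ) < 2 ^ k := by positivity
    rw [hq, div_le_iff₀ h2]
    exact Nat.floor_le (by positivity)
  have hlim : Filter.Tendsto q Filter.atTop (nhds c) := by
    have hlow : Filter.Tendsto (fun k : ℕ => c - (1 / 2) ^ k) Filter.atTop (nhds c) := by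
      have := tendsto_pow_atTop_nhds_zero_of_lt_one (by norm_num : (0:ℝ) ≤ 1/2)
        (by norm_num : (1/2 : ℝ) < 1)
      simpa using (tendsto_const_nhds (x := c)).sub this
    exact tendsto_of_tendsto_of_tendsto_of_le_of_le hlow tendsto_const_nhds hql hqu
  have htend : Filter.Tendsto (fun k => q k • y) Filter.atTop (nhds (c • y)) :=
    hlim.smul_const y
  refine isClosed_nonneg.mem_of_tendsto htend (Filter.Eventually.of_forall fun k => ?_)
  exact dyadic_smul_nonneg hy k _

private lemma real_smul_mono_right {c : ℝ} (hc : 0 ≤ c) {y₁ y₂ : F} (h : y₁ ≤ y₂) :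
    c • y₁ ≤ c • y₂ := by
  have := real_smul_nonneg hc (sub_nonneg.2 h)
  rw [smul_sub, sub_nonneg] at this
  exact this

private lemma real_smul_mono_left {c₁ c₂ : ℝ} (h : c₁ ≤ c₂) {y : F} (hy : 0 ≤ y) :
    c₁ • y ≤ c₂ • y := by
  have := real_smul_nonneg (sub_nonneg.2 h) hy
  rw [sub_smul, sub_nonneg] at this
  exact this

private lemma abs_smul_le_abs (c : ℝ) (y : F) : |c • y| ≤ |c| • |y| := by
  rw [abs_le']
  constructor
  · rcases le_or_gt 0 c with hc | hc
    · calc c • y ≤ c • |y| := real_smul_mono_right hc (le_abs_self y)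
        _ = |c| • |y| := by rw [abs_of_nonneg hc]
    · have h1 : c • y = (-c) • (-y) := by simp
      rw [h1, abs_of_neg hc]
      exact real_smul_mono_right (by linarith) (neg_le_abs y)
  · rcases le_or_gt 0 c with hc | hc
    · have h1 : -(c • y) = c • (-y) := by simp
      rw [h1, abs_of_nonneg hc]
      exact real_smul_mono_right hc (neg_le_abs y)
    · have h1 : -(c • y) = (-c) • y := by simp
      rw [h1, abs_of_neg hc]
      exact real_smul_mono_right (by linarith) (le_abs_self y)

end Aux

/-- For nontrivial Banach lattices E and F: every rank-one bounded operator
T : E → F is order L-weakly compact iff F has order continuous norm. -/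
theorem stmt_14 {E F : Type*}
    [NormedAddCommGroup E] [Lattice E] [IsOrderedAddMonoid E] [HasSolidNorm E] [NormedSpace ℝ E] [CompleteSpace E]
    [NormedAddCommGroup F] [Lattice F] [IsOrderedAddMonoid F] [HasSolidNorm F] [NormedSpace ℝ F] [CompleteSpace F]
    (hE : ∃ x : E, x ≠ 0) (hF : ∃ y : F, y ≠ 0) :
    (∀ T : E →L[ℝ] F, (∃ (f : E →L[ℝ] ℝ) (y : F), ∀ z : E, T z = f z • y) →
      IsOLwc T) ↔ HasOCN F := by
  constructor
  · -- forward: all rank-one oLwc → HasOCN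
    intro hT y hy x hx hdisj
    obtain ⟨e, he⟩ := hE
    obtain ⟨g, hg1, hge⟩ := exists_dual_vector ℝ e (norm_ne_zero_iff.mpr he)
    set f : E →L[ℝ] ℝ := (‖e‖⁻¹ : ℝ) • g with hf
    have hfe : f e = 1 := by
      simp only [hf, ContinuousLinearMap.smul_apply, hge, smul_eq_mul]
      exact inv_mul_cancel₀ (norm_ne_zero_iff.mpr he)
    set T : E →L[ℝ] F := f.smulRight y with hTdef
    have hrk : ∃ (f' : E →L[ℝ] ℝ) (y' : F), ∀ z : E, T z = f' z • y' :=
      ⟨f, y, fun z => rfl⟩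
    have hlwc := hT T hrk e e
    have hmem : ∀ n, x n ∈ SolidHull (T '' Set.Icc e e) := by
      intro n
      refine ⟨T e, ⟨e, by simp, rfl⟩, ?_⟩
      have hTe : T e = y := by
        simp [hTdef, ContinuousLinearMap.smulRight_apply, hfe]
      rw [hTe, abs_of_nonneg hy, abs_of_nonneg (hx n).1]
      exact (hx n).2
    exact hlwc.2 x hmem hdisj
  · -- backward: HasOCN → all rank-one oLwc
    intro hocn T hrk a b
    obtain ⟨f, y, hTz⟩ := hrk
    set u : E := |a| ⊔ |b| with hu
    have habs : ∀ z ∈ Set.Icc a b, |z| ≤ u := by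
      intro z hz
      rw [abs_le']
      constructor
      · exact le_trans (le_trans hz.2 (le_abs_self b)) le_sup_right
      · exact le_trans (le_trans (neg_le_neg hz.1) (neg_le_abs a)) le_sup_left
    set C : ℝ := ‖f‖ * ‖u‖ + 1 with hC
    have hfz : ∀ z ∈ Set.Icc a b, |f z| ≤ C := by
      intro z hz
      calc |f z| = ‖f z‖ := rfl
        _ ≤ ‖f‖ * ‖z‖ := f.le_opNorm z
        _ ≤ ‖f‖ * ‖u‖ := by
            have : ‖z‖ ≤ ‖u‖ := by
              apply norm_le_norm_of_abs_le_abs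
              calc |z| ≤ u := habs z hz
                _ ≤ |u| := le_abs_self u
            exact mul_le_mul_of_nonneg_left this (norm_nonneg f)
        _ ≤ C := by simp [hC]
    have hTbd : ∀ z ∈ Set.Icc a b, |T z| ≤ C • |y| := by
      intro z hz
      rw [hTz z]
      calc |f z • y| ≤ |f z| • |y| := abs_smul_le_abs _ _
        _ ≤ C • |y| := real_smul_mono_left (hfz z hz) (abs_nonneg y)
    constructor
    · rw [isBounded_iff_forall_norm_le]
      refine ⟨‖C • |y|‖, ?_⟩
      rintro w ⟨z, hz, rfl⟩
      apply norm_le_norm_of_abs_le_abs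
      calc |T z| ≤ C • |y| := hTbd z hz
        _ ≤ abs (C • |y|) := le_abs_self _
    · intro x hmem hdisj
      have hxbd : ∀ n, |x n| ∈ Set.Icc (0 : F) (C • |y|) := by
        intro n
        obtain ⟨w, ⟨z, hz, rfl⟩, hle⟩ := hmem n
        exact ⟨abs_nonneg _, le_trans hle (hTbd z hz)⟩
      have := hocn (C • |y|) ((hxbd 0).1.trans (hxbd 0).2) (fun n => |x n|) hxbd
        (by
          intro m n hmn
          rw [abs_abs, abs_abs]
          exact hdisj m n hmn)
      simpa [norm_abs_eq_norm] using this
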